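/- Let m, n ∈ ℕ with 1 ≤ m ≤ n, let p be the order of some element of the symmetric group S_m, and let t ∈ {0,…,n-m}. Then there exists a transformation f ∈ T_n whose threshold is t and whose period is p. -/

import Mathlib

/-- `t` and `p` are the threshold and period of `x`: the least values with `p > 0`
and `x ^ (t + p) = x ^ t`. -/
def IsThresholdPeriod {M : Type*} [Monoid M] (x : M) (t p : ℕ) : Prop :=
  0 < p ∧ x ^ (t + p) = x ^ t ∧
    (∀ t' p' : ℕ, 0 < p' → x ^ (t' + p') = x ^ t' → t ≤ t') ∧
    (∀ p' : ℕ, 0 < p' → x ^ (t + p') = x ^ t → p ≤ p')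

theorem exists_transformation_with_threshold_period (m n : ℕ) (hm : 1 ≤ m) (hmn : m ≤ n)
    (g : Equiv.Perm (Fin m)) (t : ℕ) (ht : t ≤ n - m) :
    ∃ f : Function.End (Fin n), IsThresholdPeriod f t (orderOf g) := by
  have hmt : m + t ≤ n := by omega
  set p := orderOf g with hp
  have hppos : 0 < p := orderOf_pos g
  -- the transformation
  set f : Function.End (Fin n) := fun i =>
    if h : (i : ℕ) < m then Fin.castLE hmn (g ⟨i, h⟩)
    else if h2 : (i : ℕ) < m + t then ⟨(i : ℕ) - 1, by omega⟩ else i with hf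
  -- powers are iterates
  have hiter : ∀ (k : ℕ) (x : Fin n), (f ^ k) x = f^[k] x := by
    intro k
    induction k with
    | zero => intro x; rfl
    | succ k ih =>
      intro x
      rw [pow_succ, Function.iterate_succ]
      exact ih (f x)
  -- behavior of iterates on the permutation part
  have L1 : ∀ (k : ℕ) (i : Fin m), f^[k] (Fin.castLE hmn i) = Fin.castLE hmn ((g ^ k) i) := by
    intro k
    induction k with
    | zero => intro i; rfl
    | succ k ih =>
      intro i
      rw [Function.iterate_succ_apply (f := f)]
      have h1 : f (Fin.castLE hmn i) = Fin.castLE hmn (g i) := by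
        simp only [hf]
        rw [dif_pos (show ((Fin.castLE hmn i : Fin n) : ℕ) < m from i.isLt)]
        rfl
      rw [h1, ih, pow_succ, Equiv.Perm.mul_apply]
  -- chain going down
  have L2 : ∀ (k j : ℕ) (hj : j < t) (hk : k ≤ j),
      f^[k] ⟨m + j, by omega⟩ = ⟨m + j - k, by omega⟩ := by
    intro k
    induction k with
    | zero => intro j hj hk; rfl
    | succ k ih =>
      intro j hj hk
      rw [Function.iterate_succ_apply (f := f)]
      have h1 : f (⟨m + j, by omega⟩ : Fin n) = ⟨m + (j - 1), by omega⟩ := by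
        simp only [hf]
        rw [dif_neg (by omega), dif_pos (by omega)]
        congr 1
        omega
      rw [h1, ih (j - 1) (by omega) (by omega)]
      congr 1
      omega
  -- falling into the permutation part
  have L3 : ∀ (k j : ℕ) (hj : j < t) (hk : j < k),
      f^[k] ⟨m + j, by omega⟩ = Fin.castLE hmn ((g ^ (k - j - 1)) ⟨m - 1, by omega⟩) := by
    intro k j hj hk
    have h0 : f^[j] (⟨m + j, by omega⟩ : Fin n) = ⟨m, by omega⟩ := by
      have := L2 j j hj le_rfl
      simpa using this
    have h1 : f (⟨m, by omega⟩ : Fin n) = Fin.castLE hmn ⟨m - 1, by omega⟩ := by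
      simp only [hf]
      rw [dif_neg (by omega), dif_pos (by omega)]
      rfl
    have hdecomp : k = (k - j - 1) + 1 + j := by omega
    rw [hdecomp, Function.iterate_add_apply (f := f), h0, Function.iterate_succ_apply (f := f), h1, L1,
      show k - j - 1 + 1 + j - j - 1 = k - j - 1 from by omega]
  -- fixed points
  have L4 : ∀ (k : ℕ) (x : Fin n), m + t ≤ (x : ℕ) → f^[k] x = x := by
    intro k
    induction k with
    | zero => intro x _; rfl
    | succ k ih =>
      intro x hx
      rw [Function.iterate_succ_apply (f := f)]
      have h1 : f x = x := by
        simp only [hf]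
        rw [dif_neg (by omega), dif_neg (by omega)]
      rw [h1, ih x hx]
  refine ⟨f, hppos, ?_, ?_, ?_⟩
  · -- f^(t+p) = f^t
    funext x
    show (f ^ (t + p)) x = (f ^ t) x
    rw [hiter, hiter]
    rcases lt_or_ge (x : ℕ) m with hx | hx
    · have hx' : x = Fin.castLE hmn ⟨(x : ℕ), hx⟩ := rfl
      rw [hx', L1, L1]
      congr 2
      rw [pow_add, hp, pow_orderOf_eq_one, mul_one]
    · rcases lt_or_ge (x : ℕ) (m + t) with hx2 | hx2
      · have hx' : x = ⟨m + ((x : ℕ) - m), by omega⟩ := by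
          ext; simp; omega
        set j := (x : ℕ) - m with hj
        have hjt : j < t := by omega
        rw [hx', L3 (t + p) j hjt (by omega), L3 t j hjt (by omega)]
        congr 2
        have : t + p - j - 1 = (t - j - 1) + p := by omega
        rw [this, pow_add, hp, pow_orderOf_eq_one, mul_one]
      · rw [L4 _ _ hx2, L4 _ _ hx2]
  · -- threshold minimality
    intro t' p' hp' heq
    by_contra hlt
    push_neg at hlt
    have ht1 : 1 ≤ t := by omega
    set x : Fin n := ⟨m + (t - 1), by omega⟩ with hx
    have h1 : f^[t'] x = ⟨m + (t - 1) - t', by omega⟩ := L2 t' (t - 1) (by omega) (by omega)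
    have heqx : (f ^ (t' + p')) x = (f ^ t') x := congrFun heq x
    rw [hiter, hiter, h1] at heqx
    rcases le_or_gt (t' + p') (t - 1) with hk | hk
    · rw [L2 (t' + p') (t - 1) (by omega) hk] at heqx
      have := congrArg Fin.val heqx
      simp at this
      omega
    · rw [L3 (t' + p') (t - 1) (by omega) hk] at heqx
      have := congrArg Fin.val heqx
      have hlt2 : (((g ^ (t' + p' - (t - 1) - 1)) ⟨m - 1, by omega⟩ : Fin m) : ℕ) < m :=
        Fin.isLt _
      simp [Fin.castLE] at this
      omega
  · -- period minimality
    intro p' hp' heq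
    have hgeq : g ^ (t + p') = g ^ t := by
      ext i
      have heqx : (f ^ (t + p')) (Fin.castLE hmn i) = (f ^ t) (Fin.castLE hmn i) :=
        congrFun heq _
      rw [hiter, hiter, L1, L1] at heqx
      exact congrArg Fin.val (Fin.castLE_injective hmn heqx)
    rw [pow_add] at hgeq
    have : g ^ p' = 1 := mul_left_cancel (a := g ^ t) (hgeq.trans (mul_one (g ^ t)).symm)
    exact Nat.le_of_dvd hp' (orderOf_dvd_of_pow_eq_one this)
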